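/- For every K > 0, the system of equations l(r₂) − l(r₁) = 2K and l̃(r₂) − l̃(r₁) = K has a unique solution (r₁, r₂) with 0 < r₁ < r₂ < 1, and this solution satisfies r₁ = 1 − r₂ and l(r₂) = K (so that r₂ ∈ (1/2, 1)). -/

import Mathlib

/-- `l(r) = 2·log(r/(1−r)) − 1/r + 1/(1−r)`. -/
noncomputable def l (r : ℝ) : ℝ := 2 * Real.log (r / (1 - r)) - 1 / r + 1 / (1 - r)

/-- `l̃(r) = log(r/(1−r)) + r/(1−r)`. -/
noncomputable def ltilde (r : ℝ) : ℝ := Real.log (r / (1 - r)) + r / (1 - r)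

/-- Auxiliary smooth version. -/
noncomputable def laux (r : ℝ) : ℝ := 2 * Real.log r - 2 * Real.log (1 - r) - 1 / r + 1 / (1 - r)

lemma l_eq_laux {r : ℝ} (h0 : 0 < r) (h1 : r < 1) : l r = laux r := by
  have h1' : (0:ℝ) < 1 - r := by linarith
  unfold l laux
  rw [Real.log_div (ne_of_gt h0) (ne_of_gt h1')]
  ring

lemma l_neg {r : ℝ} (h0 : 0 < r) (h1 : r < 1) : l (1 - r) = - l r := by
  have h1' : (0:ℝ) < 1 - r := by linarith
  unfold l
  rw [show (1 : ℝ) - (1 - r) = r by ring,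
    show (1 - r) / r = (r / (1 - r))⁻¹ by rw [inv_div], Real.log_inv]
  field_simp
  ring

lemma ltilde_sub {r : ℝ} (h0 : 0 < r) (h1 : r < 1) : ltilde r - ltilde (1 - r) = l r := by
  have h1' : (0:ℝ) < 1 - r := by linarith
  unfold ltilde l
  rw [show (1 : ℝ) - (1 - r) = r by ring,
    show (1 - r) / r = (r / (1 - r))⁻¹ by rw [inv_div], Real.log_inv]
  field_simp
  ring

lemma two_ltilde_sub_l {r : ℝ} (h0 : 0 < r) (h1 : r < 1) :
    2 * ltilde r - l r = (2 * r ^ 2 - 2 * r + 1) / (r * (1 - r)) := by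
  have h1' : (0:ℝ) < 1 - r := by linarith
  unfold ltilde l
  field_simp
  ring

lemma key {a b : ℝ} (ha : 0 < a) (hab : a < b) (hb : b < 1)
    (h : 2 * (ltilde b - ltilde a) = l b - l a) : a = 1 - b := by
  have ha1 : a < 1 := lt_trans hab hb
  have hb0 : 0 < b := lt_trans ha hab
  have ha1' : (0:ℝ) < 1 - a := by linarith
  have hb1' : (0:ℝ) < 1 - b := by linarith
  have h2 : (2 * b ^ 2 - 2 * b + 1) / (b * (1 - b)) =
      (2 * a ^ 2 - 2 * a + 1) / (a * (1 - a)) := by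
    rw [← two_ltilde_sub_l hb0 hb, ← two_ltilde_sub_l ha ha1]
    linarith
  have h3 : (2 * b ^ 2 - 2 * b + 1) * (a * (1 - a)) =
      (2 * a ^ 2 - 2 * a + 1) * (b * (1 - b)) := by
    field_simp at h2
    linarith
  have h4 : (b - a) * (1 - (a + b)) = 0 := by nlinarith [h3]
  have h5 : 1 - (a + b) = 0 := by
    rcases mul_eq_zero.mp h4 with h | h
    · exfalso; linarith
    · exact h
  linarith

lemma hasDerivAt_l {r : ℝ} (h0 : 0 < r) (h1 : r < 1) :
    HasDerivAt l (2 / r + 2 / (1 - r) + 1 / r ^ 2 + 1 / (1 - r) ^ 2) r := by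
  have h1' : (0:ℝ) < 1 - r := by linarith
  have hsub : HasDerivAt (fun x : ℝ => 1 - x) (-1) r := by
    simpa using (hasDerivAt_id r).const_sub 1
  have hlog1 : HasDerivAt (fun x : ℝ => Real.log x) r⁻¹ r := Real.hasDerivAt_log (ne_of_gt h0)
  have hlog2 : HasDerivAt (fun x : ℝ => Real.log (1 - x)) (-1 / (1 - r)) r :=
    hsub.log (ne_of_gt h1')
  have hinv1 : HasDerivAt (fun x : ℝ => 1 / x) (-(r ^ 2)⁻¹) r := by
    simpa [one_div] using hasDerivAt_inv (ne_of_gt h0)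
  have hinv2 : HasDerivAt (fun x : ℝ => 1 / (1 - x)) (-(-1) / (1 - r) ^ 2) r := by
    simpa [one_div, Pi.inv_def] using hsub.inv (ne_of_gt h1')
  have hL : HasDerivAt laux (2 * r⁻¹ - 2 * (-1 / (1 - r)) - -(r ^ 2)⁻¹ + -(-1) / (1 - r) ^ 2) r :=
    ((((hlog1.const_mul 2).sub (hlog2.const_mul 2)).sub hinv1).add hinv2)
  have heq : l =ᶠ[nhds r] laux := by
    filter_upwards [isOpen_Ioo.mem_nhds (show r ∈ Set.Ioo (0:ℝ) 1 from ⟨h0, h1⟩)] with x hx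
    exact l_eq_laux hx.1 hx.2
  have := hL.congr_of_eventuallyEq heq
  exact this.congr_deriv (by ring)

lemma l_strictMonoOn : StrictMonoOn l (Set.Ioo (0:ℝ) 1) := by
  apply strictMonoOn_of_deriv_pos (convex_Ioo (0:ℝ) 1)
  · intro x hx
    exact ((hasDerivAt_l hx.1 hx.2).continuousAt).continuousWithinAt
  · intro x hx
    rw [interior_Ioo] at hx
    rw [(hasDerivAt_l hx.1 hx.2).deriv]
    have h0 := hx.1
    have h1' : (0:ℝ) < 1 - x := by linarith [hx.2]
    positivity

lemma l_half : l (1/2 : ℝ) = 0 := by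
  unfold l
  norm_num

lemma exists_big (K : ℝ) (hK : 0 < K) : ∃ b : ℝ, (1/2 : ℝ) ≤ b ∧ b < 1 ∧ K ≤ l b := by
  have hK2 : (0:ℝ) < K + 2 := by linarith
  refine ⟨1 - 1 / (K + 2), ?_, ?_, ?_⟩
  · have : 1 / (K + 2) ≤ 1/2 := by
      rw [div_le_div_iff₀ hK2 (by norm_num)]; linarith
    linarith
  · have : 0 < 1 / (K + 2) := by positivity
    linarith
  · obtain ⟨b, hb_def⟩ : ∃ b : ℝ, b = 1 - 1 / (K + 2) := ⟨_, rfl⟩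
    rw [← hb_def]
    have hinv : 1 / (K + 2) ≤ 1/2 := by
      rw [div_le_div_iff₀ hK2 (by norm_num)]; linarith
    have hbhalf : (1/2 : ℝ) ≤ b := by rw [hb_def]; linarith
    have hb0 : (0:ℝ) < b := by linarith
    have h1b : (0:ℝ) < 1 - b := by
      rw [hb_def]
      have : 0 < 1 / (K + 2) := by positivity
      linarith
    have hlog : 0 ≤ Real.log (b / (1 - b)) := by
      apply Real.log_nonneg
      rw [le_div_iff₀ h1b]; linarith
    have h1 : 1 / (1 - b) = K + 2 := by
      rw [hb_def]
      rw [show (1:ℝ) - (1 - 1 / (K + 2)) = 1 / (K + 2) by ring]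
      field_simp
    have h2 : 1 / b ≤ 2 := by
      rw [div_le_iff₀ hb0]; linarith
    unfold l
    rw [h1]
    linarith

theorem stmt_12 (K : ℝ) (hK : 0 < K) :
    (∃! p : ℝ × ℝ, 0 < p.1 ∧ p.1 < p.2 ∧ p.2 < 1 ∧
      l p.2 - l p.1 = 2 * K ∧ ltilde p.2 - ltilde p.1 = K) ∧
    (∀ r₁ r₂ : ℝ, 0 < r₁ → r₁ < r₂ → r₂ < 1 →
      l r₂ - l r₁ = 2 * K → ltilde r₂ - ltilde r₁ = K →
      r₁ = 1 - r₂ ∧ l r₂ = K ∧ r₂ ∈ Set.Ioo (1 / 2 : ℝ) 1) := by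
  -- the ∀ part first
  have forall_part : ∀ r₁ r₂ : ℝ, 0 < r₁ → r₁ < r₂ → r₂ < 1 →
      l r₂ - l r₁ = 2 * K → ltilde r₂ - ltilde r₁ = K →
      r₁ = 1 - r₂ ∧ l r₂ = K ∧ r₂ ∈ Set.Ioo (1 / 2 : ℝ) 1 := by
    intro r₁ r₂ h0 h12 h1 hl hlt
    have hr1 : r₁ = 1 - r₂ := key h0 h12 h1 (by linarith)
    have hr20 : 0 < r₂ := lt_trans h0 h12
    have hlneg : l (1 - r₂) = - l r₂ := l_neg hr20 h1
    have hlr2 : l r₂ = K := by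
      rw [hr1, hlneg] at hl; linarith
    refine ⟨hr1, hlr2, ?_, h1⟩
    by_contra hc
    push_neg at hc
    have hhalf : (1/2 : ℝ) ∈ Set.Ioo (0:ℝ) 1 := by norm_num
    have hr2m : r₂ ∈ Set.Ioo (0:ℝ) 1 := ⟨hr20, h1⟩
    rcases eq_or_lt_of_le hc with h | h
    · rw [h, l_half] at hlr2; linarith
    · have := l_strictMonoOn hr2m hhalf h
      rw [l_half, hlr2] at this; linarith
  refine ⟨?_, forall_part⟩
  -- existence of root of l = K in (1/2, 1)
  obtain ⟨b, hbhalf, hb1, hlb⟩ := exists_big K hK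
  have hb0 : (0:ℝ) < b := by linarith
  have hcont : ContinuousOn l (Set.Icc (1/2 : ℝ) b) := by
    intro x hx
    have hx0 : 0 < x := by linarith [hx.1]
    have hx1 : x < 1 := lt_of_le_of_lt hx.2 hb1
    exact ((hasDerivAt_l hx0 hx1).continuousAt).continuousWithinAt
  obtain ⟨c, hcmem, hcval⟩ := intermediate_value_Icc hbhalf hcont
    (show K ∈ Set.Icc (l (1/2)) (l b) by rw [l_half]; exact ⟨le_of_lt hK, hlb⟩)
  have hc1 : c < 1 := lt_of_le_of_lt hcmem.2 hb1
  have hchalf : (1/2 : ℝ) < c := by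
    rcases eq_or_lt_of_le hcmem.1 with h | h
    · rw [← h, l_half] at hcval; linarith
    · exact h
  have hc0 : 0 < c := by linarith
  have hcIoo : c ∈ Set.Ioo (0:ℝ) 1 := ⟨hc0, hc1⟩
  refine ⟨(1 - c, c), ⟨by simp; linarith, by simp; linarith, by simpa using hc1, ?_, ?_⟩, ?_⟩
  · simp only
    rw [l_neg hc0 hc1, hcval]; ring
  · simp only
    rw [ltilde_sub hc0 hc1, hcval]
  · rintro ⟨q₁, q₂⟩ ⟨hq0, hq12, hq1, hql, hqlt⟩
    obtain ⟨hqe, hqK, hqmem⟩ := forall_part q₁ q₂ hq0 hq12 hq1 hql hqlt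
    have hq2Ioo : q₂ ∈ Set.Ioo (0:ℝ) 1 := ⟨by linarith [hqmem.1], hqmem.2⟩
    have : q₂ = c := l_strictMonoOn.injOn hq2Ioo hcIoo (by rw [hqK, hcval])
    simp [Prod.ext_iff, this, hqe]
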